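/- On ℝ³ with coordinates (y,z,p), the 1-forms s₁ = τ₁ + y²τ₂, s₂ = τ₂, s₃ = τ₃ − 2y τ₂, where τ₁ = dy + y dz, τ₂ = −(dp − p dz), τ₃ = −dz, satisfy the structure equations ds₁ = −s₁∧s₃, ds₂ = s₂∧s₃, ds₃ = −2 s₁∧s₂ at every point of ℝ³. -/

import Mathlib

/-!
STATEMENT 3: On ℝ³ with coordinates (y,z,p), the 1-forms s₁ = τ₁ + y²τ₂,
s₂ = τ₂, s₃ = τ₃ − 2y τ₂ (with τ₁ = dy + y dz, τ₂ = −(dp − p dz), τ₃ = −dz)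
satisfy ds₁ = −s₁∧s₃, ds₂ = s₂∧s₃, ds₃ = −2 s₁∧s₂.
-/

noncomputable section

/-- the coordinate differentials dy, dz, dp on ℝ³ with coordinates (y,z,p) -/
def dc (i : Fin 3) : (Fin 3 → ℝ) →L[ℝ] ℝ := ContinuousLinearMap.proj i

/-- exterior derivative of a 1-form -/
def extd {n : ℕ} (ω : (Fin n → ℝ) → ((Fin n → ℝ) →L[ℝ] ℝ)) :
    (Fin n → ℝ) → (Fin n → ℝ) → (Fin n → ℝ) → ℝ :=
  fun a u v => fderiv ℝ (fun x => ω x v) a u - fderiv ℝ (fun x => ω x u) a v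

/-- wedge product of two 1-forms -/
def wedge {n : ℕ} (ω η : (Fin n → ℝ) → ((Fin n → ℝ) →L[ℝ] ℝ)) :
    (Fin n → ℝ) → (Fin n → ℝ) → (Fin n → ℝ) → ℝ :=
  fun a u v => ω a u * η a v - ω a v * η a u

/-- τ₁ = dy + y dz -/
def τ₁ : (Fin 3 → ℝ) → ((Fin 3 → ℝ) →L[ℝ] ℝ) := fun a => dc 0 + a 0 • dc 1

/-- τ₂ = −(dp − p dz) -/
def τ₂ : (Fin 3 → ℝ) → ((Fin 3 → ℝ) →L[ℝ] ℝ) := fun a => -(dc 2 - a 2 • dc 1)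

/-- τ₃ = −dz -/
def τ₃ : (Fin 3 → ℝ) → ((Fin 3 → ℝ) →L[ℝ] ℝ) := fun _ => -dc 1

/-- s₁ = τ₁ + y²τ₂ -/
def s₁ : (Fin 3 → ℝ) → ((Fin 3 → ℝ) →L[ℝ] ℝ) := fun a => τ₁ a + (a 0)^2 • τ₂ a

/-- s₂ = τ₂ -/
def s₂ : (Fin 3 → ℝ) → ((Fin 3 → ℝ) →L[ℝ] ℝ) := τ₂

/-- s₃ = τ₃ − 2y τ₂ -/
def s₃ : (Fin 3 → ℝ) → ((Fin 3 → ℝ) →L[ℝ] ℝ) := fun a => τ₃ a - (2 * a 0) • τ₂ a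

lemma hproj (i : Fin 3) (a : Fin 3 → ℝ) :
    HasFDerivAt (fun x : Fin 3 → ℝ => x i) (dc i) a := (dc i).hasFDerivAt

lemma fd_s₁ (a v u : Fin 3 → ℝ) :
    fderiv ℝ (fun x => s₁ x v) a u
      = u 0 * v 1 + (a 0 * u 0 + a 0 * u 0) * (-(v 2 - a 2 * v 1))
        + (a 0 * a 0) * (u 2 * v 1) := by
  have e : (fun x => s₁ x v)
      = fun x : Fin 3 → ℝ => v 0 + x 0 * v 1 + (x 0 * x 0) * (-(v 2 - x 2 * v 1)) := by
    funext x
    simp only [s₁, τ₁, τ₂, dc, ContinuousLinearMap.add_apply, ContinuousLinearMap.sub_apply,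
      ContinuousLinearMap.neg_apply, ContinuousLinearMap.smul_apply,
      ContinuousLinearMap.proj_apply, smul_eq_mul, pow_two]
  rw [e]
  have h := ((hasFDerivAt_const (v 0) a).add ((hproj 0 a).mul_const (v 1))).add
    (((hproj 0 a).mul (hproj 0 a)).mul
      (((hasFDerivAt_const (v 2) a).sub ((hproj 2 a).mul_const (v 1))).neg))
  erw [h.fderiv]
  simp only [dc, ContinuousLinearMap.add_apply, ContinuousLinearMap.sub_apply,
    ContinuousLinearMap.neg_apply, ContinuousLinearMap.smul_apply, ContinuousLinearMap.zero_apply,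
    ContinuousLinearMap.proj_apply, smul_eq_mul, Pi.mul_apply, Pi.neg_apply, Pi.sub_apply]
  ring

lemma fd_s₂ (a v u : Fin 3 → ℝ) :
    fderiv ℝ (fun x => s₂ x v) a u = u 2 * v 1 := by
  have e : (fun x => s₂ x v)
      = fun x : Fin 3 → ℝ => -(v 2 - x 2 * v 1) := by
    funext x
    simp only [s₂, τ₂, dc, ContinuousLinearMap.add_apply, ContinuousLinearMap.sub_apply,
      ContinuousLinearMap.neg_apply, ContinuousLinearMap.smul_apply,
      ContinuousLinearMap.proj_apply, smul_eq_mul, pow_two]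
  rw [e]
  have h := ((hasFDerivAt_const (v 2) a).sub ((hproj 2 a).mul_const (v 1))).neg
  erw [h.fderiv]
  simp only [dc, ContinuousLinearMap.add_apply, ContinuousLinearMap.sub_apply,
    ContinuousLinearMap.neg_apply, ContinuousLinearMap.smul_apply, ContinuousLinearMap.zero_apply,
    ContinuousLinearMap.proj_apply, smul_eq_mul]
  ring

lemma fd_s₃ (a v u : Fin 3 → ℝ) :
    fderiv ℝ (fun x => s₃ x v) a u
      = -((2 * a 0) * (u 2 * v 1) + (-(v 2 - a 2 * v 1)) * (2 * u 0)) := by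
  have e : (fun x => s₃ x v)
      = fun x : Fin 3 → ℝ => -v 1 - (2 * x 0) * (-(v 2 - x 2 * v 1)) := by
    funext x
    simp only [s₃, τ₂, τ₃, dc, ContinuousLinearMap.add_apply, ContinuousLinearMap.sub_apply,
      ContinuousLinearMap.neg_apply, ContinuousLinearMap.smul_apply,
      ContinuousLinearMap.proj_apply, smul_eq_mul, pow_two]
  rw [e]
  have h := (hasFDerivAt_const (-v 1) a).sub
    (((hproj 0 a).const_mul 2).mul
      (((hasFDerivAt_const (v 2) a).sub ((hproj 2 a).mul_const (v 1))).neg))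
  erw [h.fderiv]
  simp only [dc, ContinuousLinearMap.add_apply, ContinuousLinearMap.sub_apply,
    ContinuousLinearMap.neg_apply, ContinuousLinearMap.smul_apply, ContinuousLinearMap.zero_apply,
    ContinuousLinearMap.proj_apply, smul_eq_mul, Pi.mul_apply, Pi.neg_apply, Pi.sub_apply]
  ring

theorem sl2_coframe_structure_equations :
    ∀ (a u v : Fin 3 → ℝ),
      extd s₁ a u v = -(wedge s₁ s₃ a u v) ∧
      extd s₂ a u v = wedge s₂ s₃ a u v ∧
      extd s₃ a u v = -2 * wedge s₁ s₂ a u v := by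
  intro a u v
  refine ⟨?_, ?_, ?_⟩ <;> simp only [extd, wedge]
  · rw [fd_s₁ a v u, fd_s₁ a u v]
    simp only [s₁, s₂, s₃, τ₁, τ₂, τ₃, dc, ContinuousLinearMap.add_apply,
      ContinuousLinearMap.sub_apply, ContinuousLinearMap.neg_apply,
      ContinuousLinearMap.smul_apply, ContinuousLinearMap.proj_apply, smul_eq_mul, pow_two]
    ring
  · rw [fd_s₂ a v u, fd_s₂ a u v]
    simp only [s₁, s₂, s₃, τ₁, τ₂, τ₃, dc, ContinuousLinearMap.add_apply,
      ContinuousLinearMap.sub_apply, ContinuousLinearMap.neg_apply,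
      ContinuousLinearMap.smul_apply, ContinuousLinearMap.proj_apply, smul_eq_mul, pow_two]
    ring
  · rw [fd_s₃ a v u, fd_s₃ a u v]
    simp only [s₁, s₂, s₃, τ₁, τ₂, τ₃, dc, ContinuousLinearMap.add_apply,
      ContinuousLinearMap.sub_apply, ContinuousLinearMap.neg_apply,
      ContinuousLinearMap.smul_apply, ContinuousLinearMap.proj_apply, smul_eq_mul, pow_two]
    ring

end
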